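/- arXiv:0805.0141 — 4 statements merged into one kernel-verified Lean document; each statement's English description precedes it below -/
import Mathlib

section
/- Let f : ℝ² → H be differentiable, let ι(α,β) := (cos α sin β)i + (sin α sin β)j + (cos β)k, and define ∂f/∂ι := ι_α⁻¹ · ∂f/∂α + ι_β⁻¹ · ∂f/∂β, where ι_α, ι_β are the partial derivatives of ι with respect to α and β (assumed invertible, i.e., sin β ≠ 0). Then ∂(ιf)/∂ι + ι · ∂f/∂ι = 2f. -/
/-- Spherical parametrization of the unit sphere of imaginary quaternions. -/
noncomputable def iotaS (α β : ℝ) : Quaternion ℝ :=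
  ⟨0, Real.cos α * Real.sin β, Real.sin α * Real.sin β, Real.cos β⟩

/-- Partial derivative of `iotaS` with respect to `α`. -/
noncomputable def iotaA (α β : ℝ) : Quaternion ℝ := deriv (fun s => iotaS s β) α

/-- Partial derivative of `iotaS` with respect to `β`. -/
noncomputable def iotaB (α β : ℝ) : Quaternion ℝ := deriv (fun s => iotaS α s) β

/-- The angular operator `∂/∂ι := ι_α⁻¹ ∂/∂α + ι_β⁻¹ ∂/∂β`. -/
noncomputable def Dangular (g : ℝ × ℝ → Quaternion ℝ) (p : ℝ × ℝ) : Quaternion ℝ :=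
  (iotaA p.1 p.2)⁻¹ * fderiv ℝ g p (1, 0) + (iotaB p.1 p.2)⁻¹ * fderiv ℝ g p (0, 1)

open Real

private noncomputable def qi : Quaternion ℝ := ⟨0,1,0,0⟩
private noncomputable def qj : Quaternion ℝ := ⟨0,0,1,0⟩
private noncomputable def qk : Quaternion ℝ := ⟨0,0,0,1⟩

private lemma iotaS_eq (α β : ℝ) :
    iotaS α β = (cos α * sin β) • qi + (sin α * sin β) • qj + (cos β) • qk := by
  ext <;> simp only [Quaternion.re_add, Quaternion.imI_add, Quaternion.imJ_add, Quaternion.imK_add, Quaternion.re_smul, Quaternion.imI_smul, Quaternion.imJ_smul, Quaternion.imK_smul] <;> simp [iotaS, qi, qj, qk]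

private lemma hasDerivAt_fst (α β : ℝ) :
    HasDerivAt (fun s => iotaS s β)
      ((-sin α * sin β) • qi + (cos α * sin β) • qj) α := by
  have h1 : HasDerivAt (fun s : ℝ => (cos s * sin β) • qi) ((-sin α * sin β) • qi) α :=
    ((Real.hasDerivAt_cos α).mul_const (sin β)).smul_const qi
  have h2 : HasDerivAt (fun s : ℝ => (sin s * sin β) • qj) ((cos α * sin β) • qj) α :=
    ((Real.hasDerivAt_sin α).mul_const (sin β)).smul_const qj
  have h3 : HasDerivAt (fun _ : ℝ => (cos β) • qk) 0 α := hasDerivAt_const α _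
  have := (h1.add h2).add h3
  simp only [iotaS_eq, add_zero] at this ⊢
  exact this

private lemma hasDerivAt_snd (α β : ℝ) :
    HasDerivAt (fun s => iotaS α s)
      ((cos α * cos β) • qi + (sin α * cos β) • qj + (-sin β) • qk) β := by
  have h1 : HasDerivAt (fun s : ℝ => (cos α * sin s) • qi) ((cos α * cos β) • qi) β :=
    ((Real.hasDerivAt_sin β).const_mul (cos α)).smul_const qi
  have h2 : HasDerivAt (fun s : ℝ => (sin α * sin s) • qj) ((sin α * cos β) • qj) β :=
    ((Real.hasDerivAt_sin β).const_mul (sin α)).smul_const qj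
  have h3 : HasDerivAt (fun s : ℝ => (cos s) • qk) ((-sin β) • qk) β :=
    (Real.hasDerivAt_cos β).smul_const qk
  have := (h1.add h2).add h3
  simp only [iotaS_eq] at this ⊢
  exact this

private lemma iotaA_eq (α β : ℝ) :
    iotaA α β = ⟨0, -sin α * sin β, cos α * sin β, 0⟩ := by
  rw [iotaA, (hasDerivAt_fst α β).deriv]
  ext <;> simp only [Quaternion.re_add, Quaternion.imI_add, Quaternion.imJ_add, Quaternion.imK_add, Quaternion.re_smul, Quaternion.imI_smul, Quaternion.imJ_smul, Quaternion.imK_smul] <;> simp [qi, qj]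

private lemma iotaB_eq (α β : ℝ) :
    iotaB α β = ⟨0, cos α * cos β, sin α * cos β, -sin β⟩ := by
  rw [iotaB, (hasDerivAt_snd α β).deriv]
  ext <;> simp only [Quaternion.re_add, Quaternion.imI_add, Quaternion.imJ_add, Quaternion.imK_add, Quaternion.re_smul, Quaternion.imI_smul, Quaternion.imJ_smul, Quaternion.imK_smul] <;> simp [qi, qj, qk]

private lemma diff_iotaF : Differentiable ℝ (fun p : ℝ × ℝ => iotaS p.1 p.2) := by
  simp only [iotaS_eq]; fun_prop

private lemma iotaA_ne (α β : ℝ) (hβ : sin β ≠ 0) : iotaA α β ≠ 0 := by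
  rw [iotaA_eq]
  intro h
  have h1 : -sin α * sin β = 0 := congrArg QuaternionAlgebra.imI h
  have h2 : cos α * sin β = 0 := congrArg QuaternionAlgebra.imJ h
  exact hβ (by linear_combination (-sin β) * (sin_sq_add_cos_sq α) - sin α * h1 + cos α * h2)

private lemma iotaB_ne (α β : ℝ) (hβ : sin β ≠ 0) : iotaB α β ≠ 0 := by
  rw [iotaB_eq]
  intro h
  have h1 : -sin β = 0 := congrArg QuaternionAlgebra.imK h
  exact hβ (by linarith)

private lemma anticomm_A (α β : ℝ) :
    iotaS α β * iotaA α β + iotaA α β * iotaS α β = 0 := by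
  ext <;> simp only [Quaternion.re_add, Quaternion.imI_add, Quaternion.imJ_add, Quaternion.imK_add, Quaternion.re_mul, Quaternion.imI_mul, Quaternion.imJ_mul, Quaternion.imK_mul, Quaternion.re_zero, Quaternion.imI_zero, Quaternion.imJ_zero, Quaternion.imK_zero] <;> simp [iotaS, iotaA_eq] <;>
    first
    | ring1
    | linear_combination (-2 * sin β * cos β) * (sin_sq_add_cos_sq α)

private lemma anticomm_B (α β : ℝ) :
    iotaS α β * iotaB α β + iotaB α β * iotaS α β = 0 := by
  ext <;> simp only [Quaternion.re_add, Quaternion.imI_add, Quaternion.imJ_add, Quaternion.imK_add, Quaternion.re_mul, Quaternion.imI_mul, Quaternion.imJ_mul, Quaternion.imK_mul, Quaternion.re_zero, Quaternion.imI_zero, Quaternion.imJ_zero, Quaternion.imK_zero] <;> simp [iotaS, iotaB_eq] <;>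
    first
    | ring1
    | linear_combination (-2 * sin β * cos β) * (sin_sq_add_cos_sq α)

private lemma inv_anticomm {x y : Quaternion ℝ} (hy : y ≠ 0)
    (h : x * y + y * x = 0) : y⁻¹ * x = -(x * y⁻¹) := by
  have h3 := congrArg (fun z => y⁻¹ * z * y⁻¹) h
  simp only [mul_add, add_mul, mul_zero, zero_mul, mul_assoc,
    mul_inv_cancel₀ hy, inv_mul_cancel₀ hy, mul_one, one_mul,
    inv_mul_cancel_left₀ hy, mul_inv_cancel_right₀ hy] at h3
  exact eq_neg_of_add_eq_zero_left h3

/-- The fundamental identity `(∂/∂ι)(ι f) + ι (∂/∂ι) f = 2 f` for differentiable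
quaternionic functions of the spherical variables `(α, β)` with `sin β ≠ 0`. -/
theorem Dangular_iota_mul_add_iota_mul_Dangular
    (f : ℝ × ℝ → Quaternion ℝ) (hf : Differentiable ℝ f)
    (α β : ℝ) (hβ : Real.sin β ≠ 0) :
    Dangular (fun p => iotaS p.1 p.2 * f p) (α, β) + iotaS α β * Dangular f (α, β)
      = 2 * f (α, β) := by
  have hFd : Differentiable ℝ (fun p : ℝ × ℝ => iotaS p.1 p.2) := diff_iotaF
  have hcurve1 : HasDerivAt (fun s : ℝ => (s, β)) ((1 : ℝ), (0 : ℝ)) α :=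
    (hasDerivAt_id α).prodMk (hasDerivAt_const α β)
  have hcurve2 : HasDerivAt (fun s : ℝ => (α, s)) ((0 : ℝ), (1 : ℝ)) β :=
    (hasDerivAt_const β α).prodMk (hasDerivAt_id β)
  have hF1 : fderiv ℝ (fun p : ℝ × ℝ => iotaS p.1 p.2) (α, β) (1, 0) = iotaA α β := by
    have h := (hFd (α, β)).hasFDerivAt.comp_hasDerivAt α hcurve1
    rw [iotaA, ← h.deriv]; rfl
  have hF2 : fderiv ℝ (fun p : ℝ × ℝ => iotaS p.1 p.2) (α, β) (0, 1) = iotaB α β := by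
    have h := (hFd (α, β)).hasFDerivAt.comp_hasDerivAt β hcurve2
    rw [iotaB, ← h.deriv]; rfl
  have hprod : ∀ v : ℝ × ℝ,
      fderiv ℝ (fun q => iotaS q.1 q.2 * f q) (α, β) v
        = iotaS α β * fderiv ℝ f (α, β) v
          + fderiv ℝ (fun p : ℝ × ℝ => iotaS p.1 p.2) (α, β) v * f (α, β) := by
    intro v
    have h := ((hFd (α, β)).hasFDerivAt.fun_mul' (hf (α, β)).hasFDerivAt).fderiv
    rw [h]
    simp [ContinuousLinearMap.add_apply, ContinuousLinearMap.smul_apply,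
      ContinuousLinearMap.smulRight_apply, smul_eq_mul]
  have ha0 := iotaA_ne α β hβ
  have hb0 := iotaB_ne α β hβ
  have ha := inv_anticomm ha0 (anticomm_A α β)
  have hb := inv_anticomm hb0 (anticomm_B α β)
  simp only [Dangular, hprod, hF1, hF2]
  simp only [mul_add, ← mul_assoc, ha, hb, inv_mul_cancel₀ ha0, inv_mul_cancel₀ hb0,
    one_mul, neg_mul]
  rw [two_mul]
  abel
end

section
/- Let ι be a purely imaginary unit quaternion and n ≥ 1. The function f(t,r) := (t + rι)⁻ⁿ, defined for (t,r) ≠ (0,0), satisfies ∂f/∂t + ι ∂f/∂r = 0, i.e., negative power functions are Cullen-regular away from the origin of the slice. -/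
/-- For a purely imaginary unit quaternion `ι` and `n ≥ 1`, the negative power
function `f(t,r) = (t + rι)⁻ⁿ` satisfies `∂f/∂t + ι ∂f/∂r = 0` away from the
origin of the slice. -/
theorem zpow_neg_cullenRegular (ι : Quaternion ℝ) (h0 : ι.re = 0)
    (h1 : ι * ι = -1) (n : ℕ) (hn : 1 ≤ n) (t r : ℝ) (h : (t, r) ≠ (0, 0)) :
    deriv (fun s : ℝ => ((s : Quaternion ℝ) + r • ι) ^ (-(n : ℤ))) t
      + ι * deriv (fun s : ℝ => ((t : Quaternion ℝ) + s • ι) ^ (-(n : ℤ))) r = 0 := by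
  set m : ℤ := -(n : ℤ) with hm
  set φ : ℂ →ₐ[ℝ] Quaternion ℝ := Complex.liftAux ι h1 with hφ
  have hφI : φ Complex.I = ι := Complex.liftAux_apply_I ι h1
  have hφr : ∀ s : ℝ, φ (s : ℂ) = (s : Quaternion ℝ) := fun s => by
    rw [show ((s : ℂ)) = algebraMap ℝ ℂ s from rfl, φ.commutes]; rfl
  set z : ℂ := (t : ℂ) + (r : ℂ) * Complex.I with hzdef
  have hz : z ≠ 0 := by
    rw [hzdef]
    intro hz0
    rw [Complex.ext_iff] at hz0
    simp at hz0
    exact h (Prod.ext hz0.1 hz0.2)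
  set d : ℂ := m * z ^ (m - 1) with hd
  -- derivative in t direction, complex
  have h1c : HasDerivAt (fun s : ℝ => ((s : ℂ) + (r : ℂ) * Complex.I) ^ m) (d * 1) t := by
    have inner : HasDerivAt (fun w : ℂ => w + (r : ℂ) * Complex.I) 1 (t : ℂ) :=
      (hasDerivAt_id _).add_const _
    have outer : HasDerivAt (fun w : ℂ => w ^ m) d z := hasDerivAt_zpow m z (Or.inl hz)
    exact (outer.comp (t : ℂ) inner).comp_ofReal
  have h2c : HasDerivAt (fun s : ℝ => ((t : ℂ) + (s : ℂ) * Complex.I) ^ m)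
      (d * (1 * Complex.I)) r := by
    have inner : HasDerivAt (fun w : ℂ => (t : ℂ) + w * Complex.I) (1 * Complex.I) (r : ℂ) :=
      ((hasDerivAt_id _).mul_const _).const_add _
    have outer : HasDerivAt (fun w : ℂ => w ^ m) d z := hasDerivAt_zpow m z (Or.inl hz)
    exact (outer.comp (r : ℂ) inner).comp_ofReal
  -- transfer via φ
  have key : ∀ (u : ℝ → ℂ) (c : ℂ) (x : ℝ), HasDerivAt u c x →
      HasDerivAt (fun s => φ (u s)) (φ c) x := by
    intro u c x hu
    have := (LinearMap.toContinuousLinearMap φ.toLinearMap).hasFDerivAt.comp_hasDerivAt x hu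
    simp at this; exact this
  have hfun1 : (fun s : ℝ => ((s : Quaternion ℝ) + r • ι) ^ m)
      = fun s : ℝ => φ (((s : ℂ) + (r : ℂ) * Complex.I) ^ m) := by
    funext s
    rw [map_zpow₀, map_add, map_mul, hφI, hφr, hφr, Algebra.smul_def]
    rfl
  have hfun2 : (fun s : ℝ => ((t : Quaternion ℝ) + s • ι) ^ m)
      = fun s : ℝ => φ (((t : ℂ) + (s : ℂ) * Complex.I) ^ m) := by
    funext s
    rw [map_zpow₀, map_add, map_mul, hφI, hφr, hφr, Algebra.smul_def]
    rfl
  have D1 : deriv (fun s : ℝ => ((s : Quaternion ℝ) + r • ι) ^ m) t = φ (d * 1) := by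
    rw [hfun1]; exact (key _ _ _ h1c).deriv
  have D2 : deriv (fun s : ℝ => ((t : Quaternion ℝ) + s • ι) ^ m) r
      = φ (d * (1 * Complex.I)) := by
    rw [hfun2]; exact (key _ _ _ h2c).deriv
  rw [D1, D2, ← hφI, ← map_mul, ← map_add]
  have : d * 1 + Complex.I * (d * (1 * Complex.I)) = 0 := by
    linear_combination d * Complex.I_mul_I
  rw [this, map_zero]
end

section
/- The only pairs of C¹ real-valued functions u, v defined on all of ℝ × (0, π) that extend continuously to the closed strip corresponding to the whole 2-sphere and satisfy the spherical Cauchy–Riemann system (sin β)⁻¹ v_α + u_β = 0, (sin β)⁻¹ u_α − v_β = 0 with 2π-periodicity in α, under the assumption that u and v are bounded, are the constant functions. -/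
noncomputable def phiG : ℝ → ℝ := fun y => 2 * Real.arctan (Real.exp y)

lemma phiG_mem (y : ℝ) : phiG y ∈ Set.Ioo 0 Real.pi := by
  constructor
  · have : Real.arctan 0 < Real.arctan (Real.exp y) :=
      Real.arctan_strictMono (Real.exp_pos y)
    rw [Real.arctan_zero] at this
    unfold phiG; linarith
  · have := Real.arctan_lt_pi_div_two (Real.exp y)
    unfold phiG; linarith

lemma phiG_hasDerivAt (y : ℝ) : HasDerivAt phiG (Real.sin (phiG y)) y := by
  have h1 : HasDerivAt (fun y => Real.arctan (Real.exp y))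
      (1 / (1 + Real.exp y ^ 2) * Real.exp y) y :=
    (Real.hasDerivAt_arctan (Real.exp y)).comp y (Real.hasDerivAt_exp y)
  have h2 := h1.const_mul (2 : ℝ)
  have hsin : Real.sin (phiG y) = 2 * (1 / (1 + Real.exp y ^ 2) * Real.exp y) := by
    unfold phiG
    rw [Real.sin_two_mul, Real.sin_arctan, Real.cos_arctan]
    have hpos : (0:ℝ) < 1 + Real.exp y ^ 2 := by positivity
    have hsq : Real.sqrt (1 + Real.exp y ^ 2) * Real.sqrt (1 + Real.exp y ^ 2)
        = 1 + Real.exp y ^ 2 := Real.mul_self_sqrt hpos.le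
    field_simp
    rw [Real.sq_sqrt hpos.le]
  rw [hsin]
  exact h2

lemma phiG_inv {β : ℝ} (hβ : β ∈ Set.Ioo 0 Real.pi) :
    phiG (Real.log (Real.tan (β / 2))) = β := by
  have h1 : 0 < β / 2 := by linarith [hβ.1]
  have h2 : β / 2 < Real.pi / 2 := by linarith [hβ.2]
  have htan : 0 < Real.tan (β / 2) := Real.tan_pos_of_pos_of_lt_pi_div_two h1 h2
  unfold phiG
  rw [Real.exp_log htan, Real.arctan_tan (by linarith) h2]
  ring

lemma clm_two (T : ℝ × ℝ →L[ℝ] ℝ) (x y : ℝ) :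
    T (x, y) = x * T (1, 0) + y * T (0, 1) := by
  have h : (x, y) = x • ((1:ℝ), (0:ℝ)) + y • ((0:ℝ), (1:ℝ)) := by
    simp [Prod.ext_iff]
  rw [h, map_add, map_smul, map_smul, smul_eq_mul, smul_eq_mul]


/-- Liouville-type theorem on the sphere: bounded `C¹` solutions `u, v` of the
spherical Cauchy--Riemann system on `ℝ × (0, π)`, `2π`-periodic in `α`
(i.e. defined on the whole 2-sphere), are constant. -/
theorem spherical_CR_global_implies_constant
    (u v : ℝ × ℝ → ℝ)
    (hu : ContDiffOn ℝ 1 u {p : ℝ × ℝ | p.2 ∈ Set.Ioo 0 Real.pi})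
    (hv : ContDiffOn ℝ 1 v {p : ℝ × ℝ | p.2 ∈ Set.Ioo 0 Real.pi})
    (huper : ∀ α β : ℝ, β ∈ Set.Ioo 0 Real.pi → u (α + 2 * Real.pi, β) = u (α, β))
    (hvper : ∀ α β : ℝ, β ∈ Set.Ioo 0 Real.pi → v (α + 2 * Real.pi, β) = v (α, β))
    (hbdd : ∃ M : ℝ, ∀ p : ℝ × ℝ, p.2 ∈ Set.Ioo 0 Real.pi →
      |u p| ≤ M ∧ |v p| ≤ M)
    (h1 : ∀ p : ℝ × ℝ, p.2 ∈ Set.Ioo 0 Real.pi →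
      (Real.sin p.2)⁻¹ * fderiv ℝ v p (1, 0) + fderiv ℝ u p (0, 1) = 0)
    (h2 : ∀ p : ℝ × ℝ, p.2 ∈ Set.Ioo 0 Real.pi →
      (Real.sin p.2)⁻¹ * fderiv ℝ u p (1, 0) - fderiv ℝ v p (0, 1) = 0) :
    ∃ c₁ c₂ : ℝ, ∀ p : ℝ × ℝ, p.2 ∈ Set.Ioo 0 Real.pi → u p = c₁ ∧ v p = c₂ := by
  obtain ⟨M, hM⟩ := hbdd
  have hS : IsOpen {p : ℝ × ℝ | p.2 ∈ Set.Ioo 0 Real.pi} :=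
    isOpen_Ioo.preimage continuous_snd
  set ψ : ℂ → ℝ × ℝ := fun z => (z.re, phiG z.im) with hψdef
  have hψmem : ∀ z : ℂ, (ψ z).2 ∈ Set.Ioo 0 Real.pi := fun z => phiG_mem z.im
  set F : ℂ → ℂ := fun z => Complex.equivRealProdCLM.symm (u (ψ z), v (ψ z)) with hFdef
  have hFval : ∀ z : ℂ, F z = ↑(u (ψ z)) + ↑(v (ψ z)) * Complex.I := fun z =>
    Complex.equivRealProdCLM_symm_apply _
  have hFre : ∀ z : ℂ, (F z).re = u (ψ z) := by intro z; rw [hFval]; simp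
  have hFim : ∀ z : ℂ, (F z).im = v (ψ z) := by intro z; rw [hFval]; simp
  have hdiff : Differentiable ℂ F := by
    intro z
    set p : ℝ × ℝ := ψ z with hpdef
    have hp : p ∈ {p : ℝ × ℝ | p.2 ∈ Set.Ioo 0 Real.pi} := hψmem z
    have hsin : 0 < Real.sin p.2 :=
      Real.sin_pos_of_pos_of_lt_pi (hψmem z).1 (hψmem z).2
    set s : ℝ := Real.sin p.2 with hsdef
    have hup : HasFDerivAt u (fderiv ℝ u p) p :=
      (((hu.differentiableOn one_ne_zero) p hp).differentiableAt (hS.mem_nhds hp)).hasFDerivAt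
    have hvp : HasFDerivAt v (fderiv ℝ v p) p :=
      (((hv.differentiableOn one_ne_zero) p hp).differentiableAt (hS.mem_nhds hp)).hasFDerivAt
    set U := fderiv ℝ u p with hUdef
    set V := fderiv ℝ v p with hVdef
    set L : ℂ →L[ℝ] ℝ × ℝ := Complex.reCLM.prod (s • Complex.imCLM) with hLdef
    have hψd : HasFDerivAt ψ L z := by
      have hre : HasFDerivAt (fun z : ℂ => z.re) (Complex.reCLM : ℂ →L[ℝ] ℝ) z :=
        Complex.reCLM.hasFDerivAt
      have him : HasFDerivAt (fun z : ℂ => phiG z.im) (s • (Complex.imCLM : ℂ →L[ℝ] ℝ)) z :=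
        (phiG_hasDerivAt z.im).comp_hasFDerivAt z Complex.imCLM.hasFDerivAt
      exact HasFDerivAt.prodMk hre him
    have hW : HasFDerivAt (fun z => (u (ψ z), v (ψ z))) ((U.comp L).prod (V.comp L)) z :=
      HasFDerivAt.prodMk (hup.comp z hψd) (hvp.comp z hψd)
    have hF : HasFDerivAt F
        ((Complex.equivRealProdCLM.symm.toContinuousLinearMap).comp
          ((U.comp L).prod (V.comp L))) z :=
      ((Complex.equivRealProdCLM.symm.toContinuousLinearMap).hasFDerivAt).comp z hW
    set c : ℂ := ⟨U (1, 0), V (1, 0)⟩ with hcdef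
    have e1 : s * U (0, 1) = - V (1, 0) := by
      have h := h1 p hp
      have h' : U (0, 1) = - (s⁻¹ * V (1, 0)) := by linarith
      rw [h']
      field_simp
    have e2 : s * V (0, 1) = U (1, 0) := by
      have h := h2 p hp
      have h' : V (0, 1) = s⁻¹ * U (1, 0) := by linarith
      rw [h']
      field_simp
    have key : HasFDerivAt F (c • (1 : ℂ →L[ℂ] ℂ)) z := by
      refine hasFDerivAt_of_restrictScalars ℝ hF ?_
      apply ContinuousLinearMap.ext
      intro w
      have hLw : L w = (w.re, s * w.im) := by
        simp [hLdef]
      have hrhs : (Complex.equivRealProdCLM.symm.toContinuousLinearMap).comp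
          ((U.comp L).prod (V.comp L)) w
          = ↑(U (L w)) + ↑(V (L w)) * Complex.I := by
        simp [Complex.equivRealProdCLM_symm_apply]
      have hlhs : (c • (1 : ℂ →L[ℂ] ℂ)).restrictScalars ℝ w = c * w := by
        simp [smul_eq_mul]
      rw [hlhs, hrhs, hLw, clm_two U, clm_two V]
      apply Complex.ext
      · simp [Complex.mul_re, hcdef]
        linear_combination - w.im * e1
      · simp [Complex.mul_im, hcdef]
        linear_combination -w.im * e2
    exact key.differentiableAt
  have hbF : Bornology.IsBounded (Set.range F) := by
    rw [isBounded_iff_forall_norm_le]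
    refine ⟨M + M, ?_⟩
    rintro x ⟨z, rfl⟩
    obtain ⟨hu', hv'⟩ := hM (ψ z) (hψmem z)
    calc ‖F z‖ ≤ |(F z).re| + |(F z).im| := Complex.norm_le_abs_re_add_abs_im _
      _ ≤ M + M := by rw [hFre, hFim]; exact add_le_add hu' hv'
  obtain ⟨w, hw⟩ := hdiff.exists_const_forall_eq_of_bounded hbF
  refine ⟨w.re, w.im, ?_⟩
  intro p hp
  set z : ℂ := ⟨p.1, Real.log (Real.tan (p.2 / 2))⟩ with hzdef
  have hz : ψ z = p := by
    have : phiG z.im = p.2 := phiG_inv hp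
    rw [hψdef]
    exact Prod.ext rfl this
  constructor
  · rw [← hz, ← hFre z, hw z]
  · rw [← hz, ← hFim z, hw z]
end

section
/- Let K* ⊆ H ≅ ℝ⁴ be a bounded open set with smooth boundary K disjoint from the real axis, with outward unit normal components (n₀,n₁,n₂,n₃), and set n(p) := n₀ + n₁i + n₂j + n₃k. If f is left-Cullen-regular and C¹ on a neighborhood of the closure of K*, with decomposition f = u + ιv where v = (1/2)(∂/∂ι)f, then ∫_K n(p) f(p) dS = ∫_{K*} (−2v/r) dV, where r is the norm of the imaginary part of p. -/
open MeasureTheory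

/-- Identification `ℝ⁴ ≅ ℍ`, `p ↦ t + xi + yj + zk`. -/
noncomputable def toQuat (p : EuclideanSpace ℝ (Fin 4)) : Quaternion ℝ :=
  ⟨p 0, p 1, p 2, p 3⟩

/-- Identification `ℍ ≅ ℝ⁴`. -/
noncomputable def toE4 (q : Quaternion ℝ) : EuclideanSpace ℝ (Fin 4) :=
  (EuclideanSpace.equiv (Fin 4) ℝ).symm ![q.re, q.imI, q.imJ, q.imK]

/-- The quaternionic units `1, i, j, k`. -/
noncomputable def quatUnit : Fin 4 → Quaternion ℝ :=
  ![1, ⟨0, 1, 0, 0⟩, ⟨0, 0, 1, 0⟩, ⟨0, 0, 0, 1⟩]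

/-- The left-Fueter operator `D_l = ∂/∂t + i ∂/∂x + j ∂/∂y + k ∂/∂z`. -/
noncomputable def fueterL (f : EuclideanSpace ℝ (Fin 4) → Quaternion ℝ)
    (p : EuclideanSpace ℝ (Fin 4)) : Quaternion ℝ :=
  ∑ i : Fin 4, quatUnit i * fderiv ℝ f p (EuclideanSpace.single i 1)

/-- The unit imaginary part `ι(p)` of the quaternion corresponding to `p`. -/
noncomputable def iotaOf (p : EuclideanSpace ℝ (Fin 4)) : Quaternion ℝ :=
  (‖(toQuat p).im‖)⁻¹ • (toQuat p).im

/-- The Cullen operator `∂/∂t + ι ∂/∂r` in the slice coordinates `p = t + rι`. -/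
noncomputable def cullenOp (f : EuclideanSpace ℝ (Fin 4) → Quaternion ℝ)
    (p : EuclideanSpace ℝ (Fin 4)) : Quaternion ℝ :=
  fderiv ℝ f p (EuclideanSpace.single 0 1)
    + iotaOf p * fderiv ℝ f p (toE4 (iotaOf p))

/-- The angular operator `∂/∂ι`, defined off the real axis through the
decomposition `D_l = ∂/∂t + ι ∂/∂r − (1/r) ∂/∂ι`. -/
noncomputable def angularOp (f : EuclideanSpace ℝ (Fin 4) → Quaternion ℝ)
    (p : EuclideanSpace ℝ (Fin 4)) : Quaternion ℝ :=
  ‖(toQuat p).im‖ • (cullenOp f p - fueterL f p)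

/-- The scalar Gauss property encoding that `frontier Kstar` is a smooth simple
closed hypersurface with outward unit normal `n` and surface measure `σ`. -/
def IsGaussRegion (Kstar V : Set (EuclideanSpace ℝ (Fin 4)))
    (n : EuclideanSpace ℝ (Fin 4) → EuclideanSpace ℝ (Fin 4))
    (σ : Measure (EuclideanSpace ℝ (Fin 4))) : Prop :=
  IsOpen Kstar ∧ Bornology.IsBounded Kstar ∧ IsOpen V ∧ closure Kstar ⊆ V ∧
    (∀ p ∈ frontier Kstar, ‖n p‖ = 1) ∧
    ∀ g : EuclideanSpace ℝ (Fin 4) → ℝ, ContDiffOn ℝ 1 g V → ∀ i : Fin 4,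
      ∫ p in frontier Kstar, g p * n p i ∂σ
        = ∫ p in Kstar, fderiv ℝ g p (EuclideanSpace.single i 1) ∂volume

/-! ### Auxiliary material -/

/-- The `c`-th real component of a quaternion, as a continuous linear map. -/
noncomputable def qProj (c : Fin 4) : Quaternion ℝ →L[ℝ] ℝ :=
  LinearMap.toContinuousLinearMap
    (![QuaternionAlgebra.reₗ (-1:ℝ) 0 (-1), QuaternionAlgebra.imIₗ (-1:ℝ) 0 (-1),
       QuaternionAlgebra.imJₗ (-1:ℝ) 0 (-1), QuaternionAlgebra.imKₗ (-1:ℝ) 0 (-1)] c)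

lemma quat_decomp (q : Quaternion ℝ) : ∑ c : Fin 4, qProj c q • quatUnit c = q := by
  simp only [Fin.sum_univ_four]
  show (⟨q.re * 1 + q.imI * 0 + q.imJ * 0 + q.imK * 0,
    q.re * 0 + q.imI * 1 + q.imJ * 0 + q.imK * 0, q.re * 0 + q.imI * 0 + q.imJ * 1 + q.imK * 0,
    q.re * 0 + q.imI * 0 + q.imJ * 0 + q.imK * 1⟩ : Quaternion ℝ) = ⟨q.re, q.imI, q.imJ, q.imK⟩
  congr 1 <;> ring

lemma toQuat_decomp (x : EuclideanSpace ℝ (Fin 4)) :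
    toQuat x = ∑ i : Fin 4, x i • quatUnit i := by
  simp only [Fin.sum_univ_four]
  show (⟨x 0, x 1, x 2, x 3⟩ : Quaternion ℝ) = ⟨x 0 * 1 + x 1 * 0 + x 2 * 0 + x 3 * 0,
    x 0 * 0 + x 1 * 1 + x 2 * 0 + x 3 * 0, x 0 * 0 + x 1 * 0 + x 2 * 1 + x 3 * 0,
    x 0 * 0 + x 1 * 0 + x 2 * 0 + x 3 * 1⟩
  congr 1 <;> ring

lemma mul_decomp' (a q : Quaternion ℝ) :
    a * q = ∑ c : Fin 4, qProj c q • (a * quatUnit c) := by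
  conv_lhs => rw [← quat_decomp q]
  rw [Finset.mul_sum]
  simp [mul_smul_comm]

lemma mul_decomp (x : EuclideanSpace ℝ (Fin 4)) (q : Quaternion ℝ) :
    toQuat x * q = ∑ i : Fin 4, ∑ c : Fin 4,
      (qProj c q * x i) • (quatUnit i * quatUnit c) := by
  rw [toQuat_decomp, Finset.sum_mul]
  refine Finset.sum_congr rfl fun i _ => ?_
  rw [smul_mul_assoc, mul_decomp' (quatUnit i) q, Finset.smul_sum]
  refine Finset.sum_congr rfl fun c _ => ?_
  rw [smul_smul, mul_comm]

/-- Functions continuous on a neighborhood of the closure of a bounded set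
are integrable on it. -/
lemma integrableOn_of_contOn {E : Type*} [NormedAddCommGroup E]
    {K V : Set (EuclideanSpace ℝ (Fin 4))} (hKb : Bornology.IsBounded K)
    (hKV : closure K ⊆ V) {h : EuclideanSpace ℝ (Fin 4) → E}
    (hh : ContinuousOn h V) : IntegrableOn h K volume := by
  have hc : IsCompact (closure K) := hKb.isCompact_closure
  exact ((hh.mono hKV).integrableOn_compact hc).mono_set subset_closure

lemma fderiv_continuousOn {V : Set (EuclideanSpace ℝ (Fin 4))} (hVo : IsOpen V)
    {g : EuclideanSpace ℝ (Fin 4) → ℝ} (hg : ContDiffOn ℝ 1 g V)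
    (v : EuclideanSpace ℝ (Fin 4)) :
    ContinuousOn (fun p => fderiv ℝ g p v) V :=
  (hg.continuousOn_fderiv_of_isOpen hVo le_rfl).clm_apply continuousOn_const

/-- A Gauss region's boundary measure integrates `g · nᵢ` for every `C¹` function. -/
lemma gauss_integrable {Kstar V : Set (EuclideanSpace ℝ (Fin 4))}
    {n : EuclideanSpace ℝ (Fin 4) → EuclideanSpace ℝ (Fin 4)}
    {σ : Measure (EuclideanSpace ℝ (Fin 4))}
    (hK : IsGaussRegion Kstar V n σ)
    {g : EuclideanSpace ℝ (Fin 4) → ℝ} (hg : ContDiffOn ℝ 1 g V) (i : Fin 4) :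
    IntegrableOn (fun p => g p * n p i) (frontier Kstar) σ := by
  obtain ⟨hKo, hKb, hVo, hKV, -, hgauss⟩ := hK
  rcases Set.eq_empty_or_nonempty Kstar with hE | hne
  · simp [hE]
  have hvlt : volume Kstar < ⊤ := hKb.measure_lt_top
  have hvpos : 0 < (volume Kstar).toReal :=
    ENNReal.toReal_pos (hKo.measure_pos volume hne).ne' hvlt.ne
  set volK : ℝ := (volume Kstar).toReal with hvolK
  set x : EuclideanSpace ℝ (Fin 4) → ℝ := fun p => p i with hx
  have hxc : ContDiff ℝ 1 x := (EuclideanSpace.proj (𝕜 := ℝ) i).contDiff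
  set A : ℝ := ∫ p in Kstar, fderiv ℝ g p (EuclideanSpace.single i 1) ∂volume with hA
  have hgK : IntegrableOn (fun p => fderiv ℝ g p (EuclideanSpace.single i 1))
      Kstar volume :=
    integrableOn_of_contOn hKb hKV (fderiv_continuousOn hVo hg _)
  have key : ∀ t : ℝ,
      ∫ p in frontier Kstar, (g p + t * x p) * n p i ∂σ = A + t * volK := by
    intro t
    have hGt : ContDiffOn ℝ 1 (fun p => g p + t * x p) V :=
      hg.add ((contDiff_const.mul hxc).contDiffOn)
    rw [hgauss _ hGt i]
    have hfd : ∀ p ∈ Kstar,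
        fderiv ℝ (fun p => g p + t * x p) p (EuclideanSpace.single i 1)
          = fderiv ℝ g p (EuclideanSpace.single i 1) + t := by
      intro p hp
      have hpV : p ∈ V := hKV (subset_closure hp)
      have hgd : DifferentiableAt ℝ g p :=
        ((hg.differentiableOn one_ne_zero) p hpV).differentiableAt (hVo.mem_nhds hpV)
      have hxd : HasFDerivAt (fun p : EuclideanSpace ℝ (Fin 4) => t * x p)
          (t • (EuclideanSpace.proj (𝕜 := ℝ) i)) p :=
        (EuclideanSpace.proj (𝕜 := ℝ) i).hasFDerivAt.const_mul t
      rw [fderiv_fun_add hgd hxd.differentiableAt, hxd.fderiv]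
      simp only [ContinuousLinearMap.add_apply, ContinuousLinearMap.smul_apply,
        smul_eq_mul, x]
      congr 1
      simp [PiLp.proj_apply, EuclideanSpace.single_apply]
    rw [setIntegral_congr_fun hKo.measurableSet hfd, integral_add hgK
      (integrableOn_const hvlt.ne), setIntegral_const]
    simp [hA, hvolK, mul_comm, measureReal_def]
  have hInt : ∀ t : ℝ, A + t * volK ≠ 0 →
      IntegrableOn (fun p => (g p + t * x p) * n p i) (frontier Kstar) σ := by
    intro t ht
    by_contra hni
    rw [IntegrableOn] at hni
    have := key t
    rw [integral_undef hni] at this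
    exact ht this.symm
  set t₁ : ℝ := (1 - A) / volK with ht₁
  set t₂ : ℝ := (2 - A) / volK with ht₂
  have h₁ : IntegrableOn (fun p => (g p + t₁ * x p) * n p i) (frontier Kstar) σ := by
    apply hInt; rw [ht₁]; field_simp; intro h; linarith
  have h₂ : IntegrableOn (fun p => (g p + t₂ * x p) * n p i) (frontier Kstar) σ := by
    apply hInt; rw [ht₂]; field_simp; intro h; linarith
  have ht12 : t₁ - t₂ = -1 / volK := by rw [ht₁, ht₂]; field_simp; ring
  have hxn : IntegrableOn (fun p => x p * n p i) (frontier Kstar) σ := by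
    have hsub := h₁.sub h₂
    have : (fun p => (g p + t₁ * x p) * n p i - (g p + t₂ * x p) * n p i)
        = fun p => (t₁ - t₂) * (x p * n p i) := by funext p; ring
    rw [Pi.sub_def, this] at hsub
    have hne' : t₁ - t₂ ≠ 0 := by
      rw [ht12]; exact div_ne_zero (by norm_num) hvpos.ne'
    have := hsub.const_mul (t₁ - t₂)⁻¹
    simpa [IntegrableOn, ← mul_assoc, inv_mul_cancel₀ hne'] using this
  have : (fun p => g p * n p i)
      = fun p => (g p + t₁ * x p) * n p i - t₁ * (x p * n p i) := by funext p; ring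
  rw [this]
  exact h₁.sub (hxn.const_mul t₁)

/-- Integral theorem for Cullen-regular functions: if `f` is `C¹` and
left-Cullen-regular on a neighborhood of the closure of a smooth bounded region
`K*` disjoint from the real axis, and `v := (1/2)(∂/∂ι) f`, then
`∫_K n(p) f(p) dS = ∫_{K*} (−2v/r) dV`. -/
theorem integral_theorem_cullen_regular
    (Kstar V : Set (EuclideanSpace ℝ (Fin 4)))
    (n : EuclideanSpace ℝ (Fin 4) → EuclideanSpace ℝ (Fin 4))
    (σ : Measure (EuclideanSpace ℝ (Fin 4)))
    (hK : IsGaussRegion Kstar V n σ)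
    (hax : ∀ p ∈ V, (toQuat p).im ≠ 0)
    (f : EuclideanSpace ℝ (Fin 4) → Quaternion ℝ)
    (hf : ContDiffOn ℝ 1 f V)
    (hreg : ∀ p ∈ V, cullenOp f p = 0) :
    ∫ p in frontier Kstar, toQuat (n p) * f p ∂σ
      = ∫ p in Kstar,
          (-2 / ‖(toQuat p).im‖) • ((1 / 2 : ℝ) • angularOp f p) ∂volume := by
  have hK' := hK
  obtain ⟨hKo, hKb, hVo, hKV, -, hgauss⟩ := hK'
  have hKsubV : Kstar ⊆ V := fun p hp => hKV (subset_closure hp)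
  -- rewrite the right-hand integrand to the Fueter operator
  have hRHSfun : ∀ p ∈ Kstar,
      (-2 / ‖(toQuat p).im‖) • ((1 / 2 : ℝ) • angularOp f p) = fueterL f p := by
    intro p hp
    have hpV : p ∈ V := hKsubV hp
    have hr : ‖(toQuat p).im‖ ≠ 0 := norm_ne_zero_iff.2 (hax p hpV)
    unfold angularOp
    rw [hreg p hpV, zero_sub, smul_smul, smul_smul]
    have hc : -2 / ‖(toQuat p).im‖ * (1 / 2) * ‖(toQuat p).im‖ = -1 := by
      field_simp
    rw [hc]
    simp
  rw [setIntegral_congr_fun hKo.measurableSet hRHSfun]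
  -- scalar component functions
  set g : Fin 4 → EuclideanSpace ℝ (Fin 4) → ℝ := fun c p => qProj c (f p) with hg
  have hgc : ∀ c, ContDiffOn ℝ 1 (g c) V := fun c =>
    (qProj c).contDiff.comp_contDiffOn hf
  have hfd : ∀ p ∈ Kstar, ∀ i c : Fin 4,
      fderiv ℝ (g c) p (EuclideanSpace.single i 1)
        = qProj c (fderiv ℝ f p (EuclideanSpace.single i 1)) := by
    intro p hp i c
    have hpV : p ∈ V := hKsubV hp
    have hdf : DifferentiableAt ℝ f p :=
      ((hf.differentiableOn one_ne_zero) p hpV).differentiableAt (hVo.mem_nhds hpV)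
    have hcomp := ((qProj c).hasFDerivAt.comp p hdf.hasFDerivAt).fderiv
    have : g c = ⇑(qProj c) ∘ f := rfl
    rw [this, hcomp]
    rfl
  have hint : ∀ i c : Fin 4,
      IntegrableOn (fun p => g c p * n p i) (frontier Kstar) σ := fun i c =>
    gauss_integrable hK (hgc c) i
  -- the left-hand side as a double sum of Gauss-type integrals
  have hLHS : ∫ p in frontier Kstar, toQuat (n p) * f p ∂σ
      = ∑ i : Fin 4, ∑ c : Fin 4,
          (∫ p in Kstar, fderiv ℝ (g c) p (EuclideanSpace.single i 1) ∂volume)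
            • (quatUnit i * quatUnit c) := by
    have hfun : (fun p => toQuat (n p) * f p)
        = fun p => ∑ i : Fin 4, ∑ c : Fin 4,
            (g c p * n p i) • (quatUnit i * quatUnit c) := by
      funext p; exact mul_decomp (n p) (f p)
    rw [hfun, integral_finset_sum _ (fun i _ =>
      integrable_finset_sum _ (fun c _ => (hint i c).smul_const _))]
    refine Finset.sum_congr rfl fun i _ => ?_
    rw [integral_finset_sum _ (fun c _ => (hint i c).smul_const _)]
    refine Finset.sum_congr rfl fun c _ => ?_
    rw [integral_smul_const, hgauss (g c) (hgc c) i]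
  rw [hLHS]
  -- the right-hand side as the same double sum
  have hfK : ∀ i c : Fin 4, IntegrableOn
      (fun p => (fderiv ℝ (g c) p (EuclideanSpace.single i 1))
        • (quatUnit i * quatUnit c)) Kstar volume := fun i c =>
    (integrableOn_of_contOn hKb hKV (fderiv_continuousOn hVo (hgc c) _)).smul_const _
  have hfe : ∀ p ∈ Kstar, fueterL f p
      = ∑ i : Fin 4, ∑ c : Fin 4,
          (fderiv ℝ (g c) p (EuclideanSpace.single i 1))
            • (quatUnit i * quatUnit c) := by
    intro p hp
    unfold fueterL
    refine Finset.sum_congr rfl fun i _ => ?_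
    rw [mul_decomp' (quatUnit i)]
    refine Finset.sum_congr rfl fun c _ => ?_
    rw [hfd p hp i c]
  rw [setIntegral_congr_fun hKo.measurableSet hfe,
    integral_finset_sum _ (fun i _ => integrable_finset_sum _ (fun c _ => hfK i c))]
  refine Finset.sum_congr rfl fun i _ => ?_
  rw [integral_finset_sum _ (fun c _ => hfK i c)]
  refine Finset.sum_congr rfl fun c _ => ?_
  rw [integral_smul_const]
end
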